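/- For every λ ∈ ℍ with λ ≠ o, the distance from o to the bisector L_λ equals half the distance from o to λ: inf{d(o,z) : z ∈ L_λ} = d(o,λ)/2, and this infimum is attained at the unique midpoint m of o and λ, i.e., the point m with d(o,m) = d(m,λ) = d(o,λ)/2. -/

import Mathlib

noncomputable section

open UpperHalfPlane MeasureTheory Topology Filter Metric Set Pointwise

local notation "SL2R" => Matrix.SpecialLinearGroup (Fin 2) ℝ

/-- The matrix topology on `SL(2,ℝ)`, induced from the space of `2 × 2` real matrices. -/
instance : TopologicalSpace SL2R :=
  TopologicalSpace.induced (fun g => (g : Matrix (Fin 2) (Fin 2) ℝ)) inferInstance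

/-- The basepoint `o = i` of the upper half-plane. -/
def o : ℍ := UpperHalfPlane.I

/-- A subgroup of `SL(2,ℝ)` is cocompact if the translates of some compact set cover `ℍ`. -/
def IsCocompact (Γ : Subgroup SL2R) : Prop :=
  ∃ K : Set ℍ, IsCompact K ∧ ⋃ γ : Γ, (γ : SL2R) • K = Set.univ

/-- The orbit `Λ = Γ • o` of the basepoint. -/
def orbitO (Γ : Subgroup SL2R) : Set ℍ := {z : ℍ | ∃ γ ∈ Γ, γ • o = z}

/-- The focal counting function `υ(z) = #{λ ∈ Λ | λ ≠ o, d(z,λ) = d(z,o)}`. -/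
def upsilon (Γ : Subgroup SL2R) (z : ℍ) : ℕ :=
  {l : ℍ | l ∈ orbitO Γ ∧ l ≠ o ∧ dist z l = dist z o}.ncard

/-- The Brillouin index `B(z) = #{λ ∈ Λ | d(z,λ) ≤ d(z,o)}`. -/
def brillouinIndex (Γ : Subgroup SL2R) (z : ℍ) : ℕ :=
  {l : ℍ | l ∈ orbitO Γ ∧ dist z l ≤ dist z o}.ncard

/-- The `k`-th Brillouin set `B_k = {z | B(z) = k}`. -/
def brillouinSet (Γ : Subgroup SL2R) (k : ℕ) : Set ℍ := {z : ℍ | brillouinIndex Γ z = k}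

/-- The perpendicular bisector `L_λ = {z | d(z,o) = d(z,λ)}`. -/
def bisector (l : ℍ) : Set ℍ := {z : ℍ | dist z o = dist z l}

set_option maxHeartbeats 1000000 in
/-- The distance from `o` to the bisector `L_λ` is `d(o,λ)/2`, and it is attained exactly at
the unique midpoint `m` of `o` and `λ`. -/
theorem dist_to_bisector_eq_half
    (l : ℍ) (hl : l ≠ o) :
    sInf (dist o '' bisector l) = dist o l / 2 ∧
    ∃ m : ℍ, m ∈ bisector l ∧ dist o m = dist o l / 2 ∧ dist m l = dist o l / 2 ∧
      ∀ m' : ℍ, dist o m' = dist o l / 2 ∧ dist m' l = dist o l / 2 → m' = m := by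
  have hore : (o : ℍ).re = 0 := rfl
  have hoim : (o : ℍ).im = 1 := rfl
  set x := l.re with hx
  set y := l.im with hy
  have hy0 : 0 < y := l.im_pos
  have hy1 : (0:ℝ) < 1 + y := by linarith
  set d := dist o l with hd
  have hd0 : 0 ≤ d := dist_nonneg
  set C := Real.cosh (d / 2) with hC
  have hC1 : 1 ≤ C := Real.one_le_cosh _
  have hC0 : 0 < C := lt_of_lt_of_le one_pos hC1
  have coshinj : ∀ a b : ℝ, 0 ≤ a → 0 ≤ b → Real.cosh a = Real.cosh b → a = b := fun a b ha hb h =>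
    Real.cosh_strictMonoOn.injOn (Set.mem_Ici.2 ha) (Set.mem_Ici.2 hb) h
  have hcoshd : Real.cosh d = (x ^ 2 + 1 + y ^ 2) / (2 * y) := by
    rw [hd, UpperHalfPlane.cosh_dist', hore, hoim, ← hx, ← hy]
    ring_nf
  have h2C : Real.cosh d = 2 * C ^ 2 - 1 := by
    have e := congrArg Real.cosh (by ring : 2 * (d / 2) = d)
    have h := Real.cosh_sq_sub_sinh_sq (d / 2)
    rw [hC, ← e, Real.cosh_two_mul]
    linarith
  have hkey : x ^ 2 + (1 + y) ^ 2 = 4 * y * C ^ 2 := by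
    have h3 : (x ^ 2 + 1 + y ^ 2) / (2 * y) = 2 * C ^ 2 - 1 := by rw [← hcoshd, h2C]
    have h4 := (div_eq_iff (by positivity : (2 * y : ℝ) ≠ 0)).mp h3
    linear_combination h4
  have hmpos : 0 < 2 * y * C / (1 + y) := by positivity
  set m : ℍ := UpperHalfPlane.mk ⟨x / (1 + y), 2 * y * C / (1 + y)⟩ hmpos with hm
  have hmre : m.re = x / (1 + y) := rfl
  have hmim : m.im = 2 * y * C / (1 + y) := rfl
  have hdom : dist o m = d / 2 := by
    apply coshinj _ _ dist_nonneg (by positivity)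
    rw [UpperHalfPlane.cosh_dist', hore, hoim, hmre, hmim, ← hC]
    rw [div_eq_iff (by positivity)]
    field_simp
    linear_combination hkey
  have hdml : dist m l = d / 2 := by
    apply coshinj _ _ dist_nonneg (by positivity)
    rw [UpperHalfPlane.cosh_dist', hmre, hmim, ← hx, ← hy, ← hC]
    rw [div_eq_iff (by positivity)]
    field_simp
    linear_combination (y ^ 2) * hkey
  have hmb : m ∈ bisector l := by
    show dist m o = dist m l
    rw [UpperHalfPlane.dist_comm m o, hdom, hdml]
  have huniq : ∀ m' : ℍ, dist o m' = d / 2 ∧ dist m' l = d / 2 → m' = m := by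
    rintro m' ⟨h1, h2⟩
    set u := m'.re with hu
    set v := m'.im with hv
    have hv0 : 0 < v := m'.im_pos
    have hE1 : u ^ 2 + 1 + v ^ 2 = 2 * v * C := by
      have := congrArg Real.cosh h1
      rw [UpperHalfPlane.cosh_dist', hore, hoim, ← hC] at this
      rw [div_eq_iff (by positivity)] at this
      linarith [this]
    have hE2 : (u - x) ^ 2 + v ^ 2 + y ^ 2 = 2 * v * y * C := by
      have := congrArg Real.cosh h2
      rw [UpperHalfPlane.cosh_dist', ← hx, ← hy, ← hu, ← hv, ← hC] at this
      rw [div_eq_iff (by positivity)] at this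
      linarith [this]
    have hsum : ((1 + y) * u - x) ^ 2 + ((1 + y) * v - 2 * y * C) ^ 2 = 0 := by
      linear_combination (y * (1 + y)) * hE1 + (1 + y) * hE2 - y * hkey
    have hs1 : ((1 + y) * u - x) ^ 2 = 0 :=
      le_antisymm (by linarith [sq_nonneg ((1 + y) * v - 2 * y * C)]) (sq_nonneg _)
    have hs2 : ((1 + y) * v - 2 * y * C) ^ 2 = 0 :=
      le_antisymm (by linarith [sq_nonneg ((1 + y) * u - x)]) (sq_nonneg _)
    have hz1 : (1 + y) * u - x = 0 := by
      exact pow_eq_zero_iff two_ne_zero |>.mp hs1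
    have hz2 : (1 + y) * v - 2 * y * C = 0 := by
      exact pow_eq_zero_iff two_ne_zero |>.mp hs2
    apply UpperHalfPlane.ext' <;> [rw [hmre]; rw [hmim]] <;>
      rw [eq_div_iff (ne_of_gt hy1)] <;> linarith
  refine ⟨?_, m, hmb, hdom, hdml, huniq⟩
  apply le_antisymm
  · exact csInf_le ⟨0, by rintro r ⟨z, -, rfl⟩; exact dist_nonneg⟩ ⟨m, hmb, hdom⟩
  · refine le_csInf ⟨d / 2, m, hmb, hdom⟩ ?_
    rintro r ⟨z, hz, rfl⟩
    have hzb : dist z o = dist z l := hz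
    have ht := dist_triangle o z l
    rw [UpperHalfPlane.dist_comm o z] at ht
    rw [UpperHalfPlane.dist_comm o z]
    linarith
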